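/- Let R be a UFD (noetherian integral domain, not a field), T ⊆ R \ {0} a saturated multiplicative subset, and suppose that for every prime element t ∈ T there exists a prime element p ∉ T with (t,p)R a proper ideal of R. Then the induced map of adic completions lim_{s} R/sR → lim_{s} T⁻¹R/sT⁻¹R is injective. -/

import Mathlib

open Ideal

/-- Compatibility condition for a family indexed by the divisibility preorder on `R \ {0}`. -/
def AdicCompat (R A : Type*) [CommRing R] [CommRing A] [Algebra R A]
    (g : ∀ s : R, A ⧸ Ideal.span {algebraMap R A s}) : Prop :=
  ∀ s t : R, s ≠ 0 → t ≠ 0 → ∀ h : s ∣ t,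
    Ideal.Quotient.factor (S := Ideal.span {algebraMap R A t}) (T := Ideal.span {algebraMap R A s})
      (Ideal.span_singleton_le_span_singleton.mpr (map_dvd _ h)) (g t) = g s

/-- The adic completion of the `R`-algebra `A`, indexed by nonzero elements of `R`. -/
def AdicCompl (R A : Type*) [CommRing R] [CommRing A] [Algebra R A] :=
  {g : ∀ s : R, A ⧸ Ideal.span {algebraMap R A s} // AdicCompat R A g}

/-- The canonical (diagonal) map `A → lim_{s ∈ R \ {0}} A/sA`. -/
def adicDiag (R A : Type*) [CommRing R] [CommRing A] [Algebra R A] (a : A) : AdicCompl R A :=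
  ⟨fun _ => Ideal.Quotient.mk _ a, fun _ _ _ _ _ => Ideal.Quotient.factor_mk _ a⟩

/-- The map of adic completions induced by `R → A`. -/
def adicInduced (R A : Type*) [CommRing R] [CommRing A] [Algebra R A] :
    AdicCompl R R → AdicCompl R A := fun f =>
  ⟨fun s => Ideal.quotientMap (I := Ideal.span {algebraMap R R s})
      (Ideal.span {algebraMap R A s}) (algebraMap R A)
      ((Ideal.span_singleton_le_iff_mem _).mpr
        (Ideal.mem_comap.mpr (Ideal.mem_span_singleton_self _))) (f.1 s),
    by
      intro s t hs ht h
      obtain ⟨r, hr⟩ := Ideal.Quotient.mk_surjective (f.1 t)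
      have h2 := f.2 s t hs ht h
      beta_reduce
      rw [← h2, ← hr]
      simp only [Ideal.quotientMap_mk, Ideal.Quotient.factor_mk]⟩

section Helpers

set_option linter.unusedSectionVars false

variable {R : Type*} [CommRing R] [IsDomain R] [IsNoetherianRing R]
  [UniqueFactorizationMonoid R] {T : Submonoid R}

lemma unit_mem_of_saturated (hsat : ∀ a b : R, a * b ∈ T → a ∈ T ∧ b ∈ T)
    {u : R} (hu : IsUnit u) : u ∈ T := by
  refine (hsat u ↑hu.unit⁻¹ ?_).1
  rw [IsUnit.mul_val_inv]
  exact T.one_mem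

lemma mem_of_assoc_of_saturated (hsat : ∀ a b : R, a * b ∈ T → a ∈ T ∧ b ∈ T)
    {w p : R} (h : Associated w p) (hw : w ∈ T) : p ∈ T := by
  obtain ⟨u, hu⟩ := h
  exact hu ▸ T.mul_mem hw (unit_mem_of_saturated hsat u.isUnit)

lemma exists_prime_dvd_of_not_unit {d : R} (hd0 : d ≠ 0) (hd : ¬ IsUnit d) :
    ∃ w : R, Prime w ∧ w ∣ d := by
  obtain ⟨i, hi, hdvd⟩ := WfDvdMonoid.exists_irreducible_factor hd hd0
  exact ⟨i, UniqueFactorizationMonoid.irreducible_iff_prime.mp hi, hdvd⟩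

lemma isRelPrime_of_no_common_prime {s τ : R} (hτ0 : τ ≠ 0)
    (hs : ∀ w : R, Prime w → w ∣ s → w ∣ τ → False) :
    IsRelPrime s τ := by
  intro d hds hdτ
  by_contra hu
  have hd0 : d ≠ 0 := fun h => hτ0 (by simpa [h] using hdτ)
  obtain ⟨w, hw, hwd⟩ := exists_prime_dvd_of_not_unit hd0 hu
  exact hs w hw (hwd.trans hds) (hwd.trans hdτ)

lemma T_ne_zero (hT0 : (0 : R) ∉ T) {τ : R} (hτ : τ ∈ T) : τ ≠ 0 := by
  rintro rfl; exact hT0 hτ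

lemma isRelPrime_pow_T (hT0 : (0 : R) ∉ T)
    (hsat : ∀ a b : R, a * b ∈ T → a ∈ T ∧ b ∈ T)
    {p τ : R} (hp : Prime p) (hpT : p ∉ T) (hτ : τ ∈ T) (k : ℕ) :
    IsRelPrime (p ^ k) τ := by
  refine isRelPrime_of_no_common_prime (T_ne_zero hT0 hτ) ?_
  intro w hw hws hwτ
  have hwp : Associated w p := hw.associated_of_dvd hp (hw.dvd_of_dvd_pow hws)
  obtain ⟨c, rfl⟩ := hwτ
  exact hpT (mem_of_assoc_of_saturated hsat hwp (hsat w c hτ).1)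

/-- The key arithmetic lemma: a compatible family whose members become divisible after
multiplication by elements of `T` is genuinely divisible. -/
lemma key_dvd (T : Submonoid R) (hT0 : (0 : R) ∉ T)
    (hsat : ∀ a b : R, a * b ∈ T → a ∈ T ∧ b ∈ T)
    (hprime : ∀ t : R, Prime t → t ∈ T →
      ∃ p : R, Prime p ∧ p ∉ T ∧ Ideal.span {t, p} ≠ ⊤)
    (r : R → R)
    (hcompat : ∀ s t : R, s ≠ 0 → t ≠ 0 → s ∣ t → s ∣ r t - r s)
    (hdvd : ∀ s : R, ∃ τ ∈ T, s ∣ τ * r s) :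
    ∀ s : R, s ≠ 0 → s ∣ r s := by
  intro s hs
  induction s using UniqueFactorizationMonoid.induction_on_coprime with
  | h0 => exact absurd rfl hs
  | h1 hx => exact hx.dvd
  | hpr i hp =>
    rename_i p
    rcases Nat.eq_zero_or_pos i with hi | hi
    · simp [hi]
    have hpi0 : p ^ i ≠ 0 := pow_ne_zero _ hp.ne_zero
    by_cases hpT : p ∈ T
    · -- the hard case: p ∈ T
      obtain ⟨q, hq, hqT, hspan⟩ := hprime p hp hpT
      set x := r (p ^ i) with hx
      -- step: for all k, x ∈ (p^i) + (q^k)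
      have hstep : ∀ k : ℕ, x ∈ span {p ^ i} ⊔ span {q ^ k} := by
        intro k
        obtain ⟨τ, hτ, hd⟩ := hdvd (p ^ i * q ^ k)
        have hqk : q ^ k ∣ r (p ^ i * q ^ k) :=
          (isRelPrime_pow_T hT0 hsat hq hqT hτ k).dvd_of_dvd_mul_left
            ((dvd_mul_left _ _).trans hd)
        have hcomp : p ^ i ∣ r (p ^ i * q ^ k) - x :=
          hcompat _ _ hpi0 (mul_ne_zero hpi0 (pow_ne_zero _ hq.ne_zero)) ⟨q ^ k, rfl⟩
        have : x = -(r (p ^ i * q ^ k) - x) + r (p ^ i * q ^ k) := by ring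
        rw [this]
        exact Submodule.add_mem_sup (Ideal.mem_span_singleton.mpr (Dvd.dvd.neg_right hcomp))
          (Ideal.mem_span_singleton.mpr hqk)
      -- Krull intersection in R/(p^i)
      set Q := R ⧸ span {p ^ i}
      set π : R →+* Q := Ideal.Quotient.mk (span {p ^ i}) with hπ
      have hmem : π x ∈ (⨅ k : ℕ, (span {π q}) ^ k • (⊤ : Submodule Q Q)) := by
        rw [Submodule.mem_iInf]
        intro k
        rw [smul_eq_mul, mul_top, Ideal.span_singleton_pow, Ideal.mem_span_singleton]
        obtain ⟨y, hy, z, hz, hyz⟩ := Submodule.mem_sup.mp (hstep k)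
        obtain ⟨c, rfl⟩ := Ideal.mem_span_singleton.mp hz
        have hh : π x = π c * (π q) ^ k := by
          rw [← hyz, map_add, Ideal.Quotient.eq_zero_iff_mem.mpr hy, zero_add,
            _root_.map_mul, map_pow, mul_comm]
        exact ⟨π c, by rw [hh, mul_comm]⟩
      obtain ⟨⟨c, hc⟩, hcx⟩ :=
        (Ideal.mem_iInf_smul_pow_eq_bot_iff (span {π q}) (π x)).mp hmem
      obtain ⟨a, ha⟩ := Ideal.mem_span_singleton'.mp hc
      obtain ⟨b, rfl⟩ := Ideal.Quotient.mk_surjective (I := span {p ^ i}) a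
      have hc2 : c * π x = π x := by rw [← smul_eq_mul]; exact hcx
      have hmem2 : (1 - b * q) * x ∈ span {p ^ i} := by
        rw [← Ideal.Quotient.eq_zero_iff_mem]
        have h1 : (Ideal.Quotient.mk (span {p ^ i})) ((1 - b * q) * x)
            = π x - (π b * π q) * π x := by
          rw [hπ, _root_.map_mul, map_sub, map_one, _root_.map_mul]; ring
        rw [h1, ha, hc2, sub_self]
      have hnd : ¬ p ∣ (1 - b * q) := by
        intro hdvd'
        apply hspan
        rw [Ideal.eq_top_iff_one]
        obtain ⟨u, hu⟩ := hdvd'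
        rw [Ideal.mem_span_pair]
        exact ⟨u, b, by linear_combination -hu⟩
      have hrel : IsRelPrime (p ^ i) (1 - b * q) := by
        refine isRelPrime_of_no_common_prime ?_ ?_
        · intro h0
          rw [sub_eq_zero] at h0
          exact hq.not_isUnit (IsUnit.of_mul_eq_one (a := q) b (by rw [mul_comm, ← h0]))
        · intro w hw hwpi hw2
          have hwp : Associated w p := hw.associated_of_dvd hp (hw.dvd_of_dvd_pow hwpi)
          exact hnd (hwp.symm.dvd.trans hw2)
      exact hrel.dvd_of_dvd_mul_left (Ideal.mem_span_singleton.mp hmem2)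
    · obtain ⟨τ, hτ, hd⟩ := hdvd (p ^ i)
      exact (isRelPrime_pow_T hT0 hsat hp hpT hτ i).dvd_of_dvd_mul_left hd
  | hcp hxy hPx hPy =>
    rename_i x y
    have hne := hs
    have hx0 : x ≠ 0 := left_ne_zero_of_mul hne
    have hy0 : y ≠ 0 := right_ne_zero_of_mul hne
    have h1 : x ∣ r (x * y) := by
      have := hcompat x (x * y) hx0 hne (dvd_mul_right _ _)
      have h2 := hPx hx0
      have : x ∣ (r (x * y) - r x) + r x := dvd_add this h2
      simpa using this
    have h2 : y ∣ r (x * y) := by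
      have := hcompat y (x * y) hy0 hne (dvd_mul_left _ _)
      have h2 := hPy hy0
      have : y ∣ (r (x * y) - r y) + r y := dvd_add this h2
      simpa using this
    exact hxy.mul_dvd h1 h2

lemma mem_span_algebraMap_iff (hT0 : (0 : R) ∉ T) {r s : R}
    (h : algebraMap R (Localization T) r ∈
      Ideal.span {algebraMap R (Localization T) s}) :
    ∃ τ ∈ T, s ∣ τ * r := by
  have hle : T ≤ nonZeroDivisors R := fun t ht =>
    mem_nonZeroDivisors_of_ne_zero (fun h0 => hT0 (h0 ▸ ht))
  have hsp : Ideal.span {algebraMap R (Localization T) s}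
      = Ideal.map (algebraMap R (Localization T)) (Ideal.span {s}) := by
    rw [Ideal.map_span, Set.image_singleton]
  rw [hsp, IsLocalization.mem_map_algebraMap_iff T] at h
  obtain ⟨⟨x, τ⟩, hx⟩ := h
  refine ⟨τ, τ.2, ?_⟩
  have hinj := IsLocalization.injective (Localization T) hle
  have h2 : (τ : R) * r = x := by
    apply hinj
    rw [_root_.map_mul, mul_comm]
    exact hx
  rw [h2]
  exact Ideal.mem_span_singleton.mp x.2

end Helpers

theorem injective_adicInduced_of_saturated
    (R : Type*) [CommRing R] [IsDomain R] [IsNoetherianRing R] [UniqueFactorizationMonoid R]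
    (hR : ¬ IsField R) (T : Submonoid R) (hT0 : (0 : R) ∉ T)
    (hsat : ∀ a b : R, a * b ∈ T → a ∈ T ∧ b ∈ T)
    (hprime : ∀ t : R, Prime t → t ∈ T →
      ∃ p : R, Prime p ∧ p ∉ T ∧ Ideal.span {t, p} ≠ ⊤) :
    Function.Injective (adicInduced R (Localization T)) := by
  intro f g hfg
  have hcomp := fun s : R => congrFun (congrArg Subtype.val hfg) s
  simp only [adicInduced] at hcomp
  choose rf hrf using fun s : R =>
    Ideal.Quotient.mk_surjective (I := Ideal.span {algebraMap R R s}) (f.1 s)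
  choose rg hrg using fun s : R =>
    Ideal.Quotient.mk_surjective (I := Ideal.span {algebraMap R R s}) (g.1 s)
  have hdvd : ∀ s : R, ∃ τ ∈ T, s ∣ τ * (rf s - rg s) := by
    intro s
    have h := hcomp s
    rw [← hrf s, ← hrg s, Ideal.quotientMap_mk, Ideal.quotientMap_mk] at h
    have h2 : algebraMap R (Localization T) (rf s - rg s) ∈
        Ideal.span {algebraMap R (Localization T) s} := by
      rw [map_sub]
      exact Ideal.Quotient.eq.mp h
    exact mem_span_algebraMap_iff hT0 h2
  have hcompat : ∀ s t : R, s ≠ 0 → t ≠ 0 → s ∣ t →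
      s ∣ (rf t - rg t) - (rf s - rg s) := by
    intro s t hs ht h
    have h1 := f.2 s t hs ht h
    have h2 := g.2 s t hs ht h
    rw [← hrf t, Ideal.Quotient.factor_mk, ← hrf s] at h1
    rw [← hrg t, Ideal.Quotient.factor_mk, ← hrg s] at h2
    have m1 := Ideal.Quotient.eq.mp h1
    have m2 := Ideal.Quotient.eq.mp h2
    have m3 : (rf t - rf s) - (rg t - rg s) ∈ Ideal.span {algebraMap R R s} :=
      sub_mem m1 m2
    rw [Algebra.algebraMap_self_apply] at m3
    have heq : (rf t - rg t) - (rf s - rg s) = (rf t - rf s) - (rg t - rg s) := by ring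
    rw [heq]
    exact Ideal.mem_span_singleton.mp m3
  have hkey := key_dvd T hT0 hsat hprime (fun s => rf s - rg s) hcompat hdvd
  apply Subtype.ext
  funext s
  rw [← hrf s, ← hrg s, Ideal.Quotient.eq]
  by_cases hs : s = 0
  · subst hs
    obtain ⟨τ, hτ, hd⟩ := hdvd 0
    rcases mul_eq_zero.mp (zero_dvd_iff.mp hd) with h | h
    · exact absurd (h ▸ hτ) hT0
    · rw [h]; exact zero_mem _
  · have hds := hkey s hs
    rw [Algebra.algebraMap_self_apply]
    exact Ideal.mem_span_singleton.mpr hds
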